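/- Let E be a row-finite graph. The graph E has a cycle with no exit if and only if there exists a nonzero element a ∈ M_E^{gr} and a negative integer n such that ^n a = a. -/

import Mathlib

set_option linter.unusedSectionVars false

/-- The algebraic preorder on a commutative monoid: `a ≤ b` iff `b = a + c` for some `c`. -/
def algLE {M : Type*} [AddCommMonoid M] (a b : M) : Prop := ∃ c, b = a + c

/-- A row-finite directed graph: vertices `V`, edges `Ed`, source `s`, range `r`,
and for each vertex the (finite) set of edges it emits. -/
structure RFGraph (V : Type) (Ed : Type) where
  s : Ed → V
  r : Ed → V
  emit : V → Finset Ed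
  mem_emit : ∀ e v, e ∈ emit v ↔ s e = v

namespace RFGraph

variable {V Ed : Type} [DecidableEq V] (G : RFGraph V Ed)

/-- The one-step rewriting relation `→₁` on the free commutative monoid `Multiset V`:
replace one occurrence of a non-sink vertex `v` by the sum of ranges of edges emitted by `v`. -/
def Step1 (a b : Multiset V) : Prop :=
  ∃ v : V, v ∈ a ∧ G.emit v ≠ ∅ ∧ b = a.erase v + (G.emit v).val.map G.r

/-- The reflexive-transitive closure `→` of `→₁`. -/
def Step : Multiset V → Multiset V → Prop := Relation.ReflTransGen G.Step1

/-- The congruence on the free commutative monoid generated by `→₁`. -/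
def gcon : AddCon (Multiset V) := addConGen G.Step1

/-- The graph monoid `M_E`. -/
def GM := G.gcon.Quotient

instance : AddCommMonoid G.GM := inferInstanceAs (AddCommMonoid G.gcon.Quotient)

/-- One-step rewriting for the talented monoid: replace `v(i)` by `Σ_{e ∈ s⁻¹(v)} r(e)(i+1)`. -/
def TStep1 (a b : Multiset (V × ℤ)) : Prop :=
  ∃ (v : V) (i : ℤ), (v, i) ∈ a ∧ G.emit v ≠ ∅ ∧
    b = a.erase (v, i) + (G.emit v).val.map (fun e => (G.r e, i + 1))

/-- The congruence generated by the talented one-step relation. -/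
def tcon : AddCon (Multiset (V × ℤ)) := addConGen G.TStep1

/-- The talented monoid `M_E^{gr}`. -/
def TM := G.tcon.Quotient

instance : AddCommMonoid G.TM := inferInstanceAs (AddCommMonoid G.tcon.Quotient)

/-- The generator `v(i)` of the talented monoid. -/
def tgen (v : V) (i : ℤ) : G.TM := G.tcon.mk' {(v, i)}

/-- The shift `v(i) ↦ v(i+n)` on the free commutative monoid `Multiset (V × ℤ)`. -/
def shiftMul (n : ℤ) : Multiset (V × ℤ) →+ Multiset (V × ℤ) where
  toFun a := a.map fun p => (p.1, p.2 + n)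
  map_zero' := rfl
  map_add' a b := Multiset.map_add (fun p => (p.1, p.2 + n)) a b

lemma shift_inj (n : ℤ) : Function.Injective (fun p : V × ℤ => (p.1, p.2 + n)) := by
  rintro ⟨a, b⟩ ⟨c, d⟩ h
  simp only [Prod.mk.injEq] at h
  exact Prod.ext h.1 (by omega)

lemma tstep1_shift (n : ℤ) {a b : Multiset (V × ℤ)} (h : G.TStep1 a b) :
    G.TStep1 (shiftMul n a) (shiftMul n b) := by
  obtain ⟨v, i, hv, hne, rfl⟩ := h
  refine ⟨v, i + n, Multiset.mem_map.2 ⟨(v, i), hv, rfl⟩, hne, ?_⟩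
  show Multiset.map _ _ = _
  rw [Multiset.map_add]
  congr 1
  · exact (Multiset.map_erase _ (shift_inj n) (v, i) a)
  · rw [Multiset.map_map]
    congr 1
    funext e
    simp only [Function.comp_apply]
    congr 1
    omega

lemma tcon_shift (n : ℤ) {a b : Multiset (V × ℤ)} (h : G.tcon a b) :
    G.tcon (shiftMul n a) (shiftMul n b) := by
  have hle : addConGen G.TStep1 ≤
      { r := fun a b => G.tcon (shiftMul n a) (shiftMul n b)
        iseqv := ⟨fun _ => G.tcon.refl _, fun h => G.tcon.symm h,
          fun h₁ h₂ => G.tcon.trans h₁ h₂⟩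
        add' := fun h₁ h₂ => by
          simpa only [map_add] using G.tcon.add h₁ h₂ } := by
    refine AddCon.addConGen_le.2 fun x y hxy => ?_
    exact AddConGen.Rel.of _ _ (G.tstep1_shift n hxy)
  exact hle h

/-- The `ℤ`-action on the talented monoid, `ⁿ(v(i)) = v(i+n)`. -/
def tshift (n : ℤ) : G.TM →+ G.TM :=
  G.tcon.lift (G.tcon.mk'.comp (shiftMul n)) (by
    intro a b h
    show G.tcon.mk' (shiftMul n a) = G.tcon.mk' (shiftMul n b)
    exact (AddCon.eq _).2 (G.tcon_shift n h))

/-- Reachability: there is a (possibly trivial) path from `u` to `v`. -/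
def Reaches (u v : V) : Prop :=
  Relation.ReflTransGen (fun a b => ∃ e : Ed, G.s e = a ∧ G.r e = b) u v

/-- A cycle: a nonempty path of edges, closed up, with distinct source vertices. -/
def IsCycle (p : List Ed) : Prop :=
  ∃ h : p ≠ [], List.Chain' (fun e f => G.r e = G.s f) p ∧
    G.r (p.getLast h) = G.s (p.head h) ∧ (p.map G.s).Nodup

/-- The cycle `p` has an exit: some vertex on it emits an edge not on the cycle. -/
def HasExit (p : List Ed) : Prop :=
  ∃ e : Ed, (∃ f ∈ p, G.s e = G.s f) ∧ e ∉ p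

/-- The cycle `p` has no exit: every vertex on it emits exactly its cycle edge. -/
def NoExit (p : List Ed) : Prop :=
  ∀ e ∈ p, G.emit (G.s e) = {e}

/-- `ℤ`-order-ideals of the talented monoid. -/
def IsOrderIdeal (I : Set G.TM) : Prop :=
  (0 : G.TM) ∈ I ∧ (∀ a b : G.TM, a ∈ I → b ∈ I → a + b ∈ I) ∧
    (∀ (n : ℤ) (a : G.TM), a ∈ I → G.tshift n a ∈ I) ∧
    (∀ a b : G.TM, algLE a b → b ∈ I → a ∈ I)

/-- The smallest `ℤ`-order-ideal of `M_E^{gr}` containing `v(0)`. -/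
def genIdeal (v : V) : Set G.TM :=
  ⋂₀ {I : Set G.TM | G.IsOrderIdeal I ∧ G.tgen v 0 ∈ I}

/-- Minimality in the talented monoid: `0 ≠ b ≤ a` implies `a ≤ b`. -/
def TMin (a : G.TM) : Prop := ∀ b : G.TM, b ≠ 0 → algLE b a → algLE a b

/-- The covering graph `\bar E`. -/
def cover : RFGraph (V × ℤ) (Ed × ℤ) where
  s p := (G.s p.1, p.2)
  r p := (G.r p.1, p.2 + 1)
  emit p := (G.emit p.1).map ⟨fun e => (e, p.2), fun a b h => by
    simpa using congrArg Prod.fst h⟩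
  mem_emit := by
    rintro ⟨e, n⟩ ⟨v, m⟩
    simp only [Finset.mem_map, Function.Embedding.coeFn_mk, Prod.mk.injEq, G.mem_emit]
    constructor
    · rintro ⟨a, ha, rfl, rfl⟩; exact ⟨ha, rfl⟩
    · rintro ⟨rfl, rfl⟩; first | exact ⟨e, rfl, rfl, rfl⟩ | exact ⟨e, rfl, rfl⟩ | exact ⟨e, rfl⟩ | simp

/-- The set of vertices on a cycle. -/
def cycVerts (p : List Ed) : Set V := {v | ∃ e ∈ p, G.s e = v}

end RFGraph

namespace RFGraph

variable {V Ed : Type} [DecidableEq V] (G : RFGraph V Ed)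

lemma shiftMul_apply (n : ℤ) (a : Multiset (V × ℤ)) :
    shiftMul n a = a.map (fun p => (p.1, p.2 + n)) := rfl

lemma shiftMul_shiftMul (s t : ℤ) (a : Multiset (V × ℤ)) :
    shiftMul s (shiftMul t a) = shiftMul (t + s) a := by
  simp only [shiftMul_apply, Multiset.map_map]
  apply Multiset.map_congr rfl
  intro p _
  simp [Function.comp, add_assoc]

lemma shiftMul_zero' (a : Multiset (V × ℤ)) : shiftMul 0 a = a := by
  simp only [shiftMul_apply, add_zero]
  rw [show (fun p : V × ℤ => (p.1, p.2)) = id from funext fun p => rfl, Multiset.map_id]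

lemma mem_shiftMul {t : ℤ} {Z : Multiset (V × ℤ)} {w : V} {j : ℤ} :
    (w, j) ∈ shiftMul t Z ↔ (w, j - t) ∈ Z := by
  simp only [shiftMul_apply, Multiset.mem_map]
  constructor
  · rintro ⟨⟨x, y⟩, hxy, h⟩
    injection h with h1 h2
    subst h1
    have : y = j - t := by omega
    subst this; exact hxy
  · intro h
    refine ⟨(w, j - t), h, ?_⟩
    show (w, j - t + t) = (w, j)
    rw [sub_add_cancel]

open Classical in
/-- Full expansion with fuel `k`, stalling at sinks. -/
noncomputable def exp : ℕ → V → ℤ → Multiset (V × ℤ)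
  | 0, v, i => {(v, i)}
  | (k+1), v, i =>
    if G.emit v = ∅ then {(v, i)}
    else (G.emit v).val.bind (fun e => exp k (G.r e) (i+1))

lemma exp_zero (v : V) (i : ℤ) : G.exp 0 v i = {(v, i)} := rfl

open Classical in
lemma exp_succ (k : ℕ) (v : V) (i : ℤ) :
    G.exp (k+1) v i =
      if G.emit v = ∅ then {(v, i)}
      else (G.emit v).val.bind (fun e => G.exp k (G.r e) (i+1)) := rfl

lemma exp_sink {v : V} (h : G.emit v = ∅) (k : ℕ) (i : ℤ) : G.exp k v i = {(v, i)} := by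
  cases k with
  | zero => exact G.exp_zero v i
  | succ k => rw [G.exp_succ, if_pos h]

lemma exp_ne_zero (k : ℕ) (v : V) (i : ℤ) : G.exp k v i ≠ 0 := by
  induction k generalizing v i with
  | zero => simp [exp_zero]
  | succ k ih =>
    by_cases h : G.emit v = ∅
    · rw [G.exp_sink h]; simp
    · rw [G.exp_succ, if_neg h]
      obtain ⟨e, he⟩ := Finset.nonempty_iff_ne_empty.2 h
      obtain ⟨q, hq⟩ := Multiset.exists_mem_of_ne_zero (ih (G.r e) (i+1))
      intro h0
      have : q ∈ (G.emit v).val.bind (fun e => G.exp k (G.r e) (i+1)) :=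
        Multiset.mem_bind.2 ⟨e, he, hq⟩
      rw [h0] at this
      exact Multiset.notMem_zero q this

lemma exp_mem {k : ℕ} {v : V} {i : ℤ} {w : V} {j : ℤ} (h : (w, j) ∈ G.exp k v i) :
    i ≤ j ∧ (j = i + k ∨ G.emit w = ∅) := by
  induction k generalizing v i with
  | zero =>
    rw [G.exp_zero, Multiset.mem_singleton] at h
    injection h with h1 h2
    subst h1; subst h2
    exact ⟨le_refl _, Or.inl (by simp)⟩
  | succ k ih =>
    by_cases hs : G.emit v = ∅
    · rw [G.exp_sink hs, Multiset.mem_singleton] at h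
      injection h with h1 h2
      subst h1; subst h2
      exact ⟨le_refl _, Or.inr hs⟩
    · rw [G.exp_succ, if_neg hs] at h
      obtain ⟨e, _, hq⟩ := Multiset.mem_bind.1 h
      obtain ⟨h1, h2⟩ := ih hq
      refine ⟨by omega, ?_⟩
      rcases h2 with h2 | h2
      · left; push_cast; omega
      · right; exact h2

lemma exp_comp (k l : ℕ) (v : V) (i : ℤ) :
    G.exp (k + l) v i =
      (G.exp k v i).bind (fun p => G.exp ((i + k + l - p.2).toNat) p.1 p.2) := by
  induction k generalizing v i with
  | zero =>
    rw [Nat.zero_add, G.exp_zero, Multiset.singleton_bind]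
    have h1 : (i + ((0:ℕ):ℤ) + (l:ℤ) - i).toNat = l := by push_cast; omega
    rw [h1]
  | succ k ih =>
    have hsa : k + 1 + l = (k + l) + 1 := by omega
    rw [hsa]
    by_cases hs : G.emit v = ∅
    · rw [G.exp_sink hs, G.exp_sink hs, Multiset.singleton_bind]
      have h1 : (i + ((k+1:ℕ):ℤ) + (l:ℤ) - i).toNat = (k + l) + 1 := by push_cast; omega
      rw [h1, G.exp_sink hs]
    · rw [G.exp_succ (k+l) v i, if_neg hs, G.exp_succ k v i, if_neg hs, Multiset.bind_assoc]
      apply Multiset.bind_congr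
      intro e _
      rw [ih]
      apply Multiset.bind_congr
      rintro ⟨w, j⟩ _
      have h1 : (i + 1 + (k:ℤ) + (l:ℤ) - j).toNat = (i + ((k+1:ℕ):ℤ) + (l:ℤ) - j).toNat := by
        push_cast; omega
      show G.exp ((i + 1 + (k:ℤ) + (l:ℤ) - j).toNat) w j
          = G.exp ((i + ((k+1:ℕ):ℤ) + (l:ℤ) - j).toNat) w j
      rw [h1]

/-- Expansion of a multiset to level `d`. -/
noncomputable def Elev (d : ℤ) (Z : Multiset (V × ℤ)) : Multiset (V × ℤ) :=
  Z.bind (fun p => G.exp ((d - p.2).toNat) p.1 p.2)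

lemma Elev_add (d : ℤ) (a b : Multiset (V × ℤ)) :
    G.Elev d (a + b) = G.Elev d a + G.Elev d b := Multiset.add_bind a b _

lemma Elev_cons (d : ℤ) (p : V × ℤ) (a : Multiset (V × ℤ)) :
    G.Elev d (p ::ₘ a) = G.exp ((d - p.2).toNat) p.1 p.2 + G.Elev d a := Multiset.cons_bind _ _ _

lemma Elev_comp {d d' : ℤ} (h : d ≤ d') (Z : Multiset (V × ℤ)) :
    G.Elev d' (G.Elev d Z) = G.Elev d' Z := by
  unfold Elev
  rw [Multiset.bind_assoc]
  apply Multiset.bind_congr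
  rintro ⟨v, i⟩ _
  by_cases hi : d ≤ i
  · have h0 : (d - i).toNat = 0 := by omega
    rw [h0, G.exp_zero, Multiset.singleton_bind]
  · have hk : (d' - i).toNat = (d - i).toNat + (d' - d).toNat := by omega
    show (G.exp ((d - i).toNat) v i).bind (fun p => G.exp ((d' - p.2).toNat) p.1 p.2)
        = G.exp ((d' - i).toNat) v i
    rw [hk, G.exp_comp]
    apply Multiset.bind_congr
    rintro ⟨w, j⟩ _
    have h1 : (d' - j).toNat = (i + ((d - i).toNat : ℤ) + ((d' - d).toNat : ℤ) - j).toNat := by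
      omega
    show G.exp ((d' - j).toNat) w j
        = G.exp ((i + ((d - i).toNat : ℤ) + ((d' - d).toNat : ℤ) - j).toNat) w j
    rw [h1]

lemma exp_shift (k : ℕ) (v : V) (i t : ℤ) :
    G.exp k v (i + t) = (G.exp k v i).map (fun p => (p.1, p.2 + t)) := by
  induction k generalizing v i with
  | zero => simp [exp_zero]
  | succ k ih =>
    by_cases hs : G.emit v = ∅
    · rw [G.exp_sink hs, G.exp_sink hs]; simp
    · rw [G.exp_succ, if_neg hs, G.exp_succ, if_neg hs, Multiset.map_bind]
      apply Multiset.bind_congr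
      intro e _
      rw [show i + t + 1 = (i + 1) + t by ring, ih]

lemma Elev_shift (d t : ℤ) (Z : Multiset (V × ℤ)) :
    G.Elev (d + t) (shiftMul t Z) = shiftMul t (G.Elev d Z) := by
  unfold Elev
  rw [shiftMul_apply, shiftMul_apply, Multiset.bind_map, Multiset.map_bind]
  apply Multiset.bind_congr
  rintro ⟨v, i⟩ _
  show G.exp ((d + t - (i + t)).toNat) v (i + t)
      = Multiset.map (fun p => (p.1, p.2 + t)) (G.exp ((d - i).toNat) v i)
  rw [show d + t - (i + t) = d - i by ring, G.exp_shift]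

lemma Elev_congr_of_le {d d' : ℤ} {a b : Multiset (V × ℤ)} (h : G.Elev d a = G.Elev d b)
    (hd : d ≤ d') : G.Elev d' a = G.Elev d' b := by
  rw [← G.Elev_comp hd a, h, G.Elev_comp hd b]

lemma tcon_elev {a b : Multiset (V × ℤ)} (h : G.tcon a b) :
    ∃ d : ℤ, G.Elev d a = G.Elev d b := by
  have hle : addConGen G.TStep1 ≤
      { r := fun a b => ∃ d : ℤ, G.Elev d a = G.Elev d b
        iseqv := ⟨fun _ => ⟨0, rfl⟩, fun ⟨d, h⟩ => ⟨d, h.symm⟩,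
          fun ⟨d₁, h₁⟩ ⟨d₂, h₂⟩ => ⟨max d₁ d₂,
            (G.Elev_congr_of_le h₁ (le_max_left d₁ d₂)).trans
              (G.Elev_congr_of_le h₂ (le_max_right d₁ d₂))⟩⟩
        add' := fun ⟨d₁, h₁⟩ ⟨d₂, h₂⟩ => ⟨max d₁ d₂, by
          rw [Elev_add, Elev_add, G.Elev_congr_of_le h₁ (le_max_left d₁ d₂),
            G.Elev_congr_of_le h₂ (le_max_right d₁ d₂)]⟩ } := by
    refine AddCon.addConGen_le.2 fun x y hxy => ?_
    obtain ⟨v, i, hv, hne, rfl⟩ := hxy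
    refine ⟨i + 1, ?_⟩
    conv_lhs => rw [← Multiset.cons_erase hv]
    rw [G.Elev_cons, Elev_add, add_comm (G.exp _ _ _)]
    congr 1
    have h1 : ((i + 1) - (v, i).2).toNat = 1 := by simp
    rw [h1, G.exp_succ, if_neg hne]
    unfold Elev
    rw [Multiset.bind_map]
    apply Multiset.bind_congr
    intro e _
    show G.exp 0 (G.r e) (i+1) = G.exp ((i + 1 - (i+1)).toNat) (G.r e) (i + 1)
    rw [show ((i + 1 : ℤ) - (i+1)).toNat = 0 by omega]
  exact hle h

lemma madd_eq_zero {α : Type*} {s t : Multiset α} : s + t = 0 ↔ s = 0 ∧ t = 0 := by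
  constructor
  · intro h
    have := congrArg Multiset.card h
    simp only [Multiset.card_add, Multiset.card_zero] at this
    constructor <;> [skip; skip] <;>
      rw [← Multiset.card_eq_zero] <;> omega
  · rintro ⟨rfl, rfl⟩; simp

lemma tcon_zero_iff {a b : Multiset (V × ℤ)} (h : G.tcon a b) : a = 0 ↔ b = 0 := by
  have hle : addConGen G.TStep1 ≤
      { r := fun a b => (a = 0 ↔ b = 0)
        iseqv := ⟨fun _ => Iff.rfl, Iff.symm, Iff.trans⟩
        add' := fun {w x y z} h₁ h₂ => by
          show (w + y = 0) ↔ (x + z = 0)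
          rw [madd_eq_zero, madd_eq_zero]
          exact and_congr h₁ h₂ } := by
    refine AddCon.addConGen_le.2 fun x y hxy => ?_
    obtain ⟨v, i, hv, hne, rfl⟩ := hxy
    have hx : x ≠ 0 := fun h0 => by rw [h0] at hv; exact Multiset.notMem_zero _ hv
    have hy : x.erase (v, i) + (G.emit v).val.map (fun e => (G.r e, i + 1)) ≠ 0 := by
      intro h0
      obtain ⟨e, he⟩ := Finset.nonempty_iff_ne_empty.2 hne
      have : (G.r e, i + 1) ∈ x.erase (v, i) + (G.emit v).val.map (fun e => (G.r e, i + 1)) := by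
        rw [Multiset.mem_add]; right; exact Multiset.mem_map.2 ⟨e, he, rfl⟩
      rw [h0] at this
      exact Multiset.notMem_zero _ this
    exact iff_of_false hx hy
  exact hle h

lemma Elev_ne_zero (d : ℤ) {Z : Multiset (V × ℤ)} (h : Z ≠ 0) : G.Elev d Z ≠ 0 := by
  obtain ⟨p, hp⟩ := Multiset.exists_mem_of_ne_zero h
  obtain ⟨q, hq⟩ := Multiset.exists_mem_of_ne_zero (G.exp_ne_zero ((d - p.2).toNat) p.1 p.2)
  intro h0
  have : q ∈ G.Elev d Z := Multiset.mem_bind.2 ⟨p, hp, hq⟩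
  rw [h0] at this
  exact Multiset.notMem_zero _ this

lemma exists_snd_ub (Z : Multiset (V × ℤ)) (c : ℤ) : ∃ M : ℤ, c ≤ M ∧ ∀ p ∈ Z, p.2 ≤ M := by
  induction Z using Multiset.induction_on with
  | empty => exact ⟨c, le_refl _, by simp⟩
  | cons p s ih =>
    obtain ⟨M, h1, h2⟩ := ih
    refine ⟨max M p.2, le_trans h1 (le_max_left _ _), ?_⟩
    intro q hq
    rcases Multiset.mem_cons.1 hq with h | h
    · subst h; exact le_max_right _ _
    · exact le_trans (h2 q h) (le_max_left _ _)

lemma exists_snd_lb (Z : Multiset (V × ℤ)) : ∃ c : ℤ, ∀ p ∈ Z, c ≤ p.2 := by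
  induction Z using Multiset.induction_on with
  | empty => exact ⟨0, by simp⟩
  | cons p s ih =>
    obtain ⟨c, hc⟩ := ih
    refine ⟨min c p.2, ?_⟩
    intro q hq
    rcases Multiset.mem_cons.1 hq with h | h
    · subst h; exact min_le_right _ _
    · exact le_trans (min_le_left _ _) (hc q h)

lemma card_le_sum_map {α : Type*} (s : Multiset α) (f : α → ℕ) (h : ∀ a ∈ s, 1 ≤ f a) :
    Multiset.card s ≤ (s.map f).sum := by
  induction s using Multiset.induction_on with
  | empty => simp
  | cons a t ih =>
    simp only [Multiset.card_cons, Multiset.map_cons, Multiset.sum_cons]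
    have h1 := ih (fun x hx => h x (Multiset.mem_cons_of_mem hx))
    have h2 := h a (Multiset.mem_cons_self a t)
    omega

lemma eq_one_of_sum_eq_card {α : Type*} (s : Multiset α) (f : α → ℕ)
    (h1 : ∀ a ∈ s, 1 ≤ f a) (h2 : (s.map f).sum = Multiset.card s) :
    ∀ a ∈ s, f a = 1 := by
  induction s using Multiset.induction_on with
  | empty => simp
  | cons a t ih =>
    simp only [Multiset.card_cons, Multiset.map_cons, Multiset.sum_cons] at h2
    have hb := card_le_sum_map t f (fun x hx => h1 x (Multiset.mem_cons_of_mem hx))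
    have ha := h1 a (Multiset.mem_cons_self a t)
    have hfa : f a = 1 := by omega
    intro x hx
    rcases Multiset.mem_cons.1 hx with h | h
    · subst h; exact hfa
    · exact ih (fun y hy => h1 y (Multiset.mem_cons_of_mem hy)) (by omega) x h

end RFGraph

namespace RFGraph

variable {V Ed : Type} [DecidableEq V] (G : RFGraph V Ed)

lemma tstep1_tcon {a b : Multiset (V × ℤ)} (h : G.TStep1 a b) : G.tcon a b :=
  AddConGen.Rel.of _ _ h

lemma tcon_step (v : V) (i : ℤ) (hne : G.emit v ≠ ∅) :
    G.tcon {(v, i)} ((G.emit v).val.map (fun e => (G.r e, i+1))) := by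
  apply G.tstep1_tcon
  refine ⟨v, i, Multiset.mem_singleton_self _, hne, ?_⟩
  rw [show ({(v, i)} : Multiset (V × ℤ)) = (v, i) ::ₘ 0 from rfl, Multiset.erase_cons_head,
    zero_add]

lemma tcon_walk (q : List Ed) (hq : q ≠ []) (hch : List.Chain' (fun e f => G.r e = G.s f) q)
    (hno : ∀ e ∈ q, G.emit (G.s e) = {e}) (i : ℤ) :
    G.tcon {(G.s (q.head hq), i)} {(G.r (q.getLast hq), i + q.length)} := by
  induction q generalizing i with
  | nil => exact absurd rfl hq
  | cons e q ih =>
    have hnee : G.emit (G.s e) ≠ ∅ := by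
      rw [hno e List.mem_cons_self]
      exact Finset.singleton_ne_empty e
    have h1 : G.tcon {(G.s e, i)} {(G.r e, i + 1)} := by
      have h := G.tcon_step (G.s e) i hnee
      rw [hno e List.mem_cons_self] at h
      simpa using h
    cases q with
    | nil => simpa using h1
    | cons f q' =>
      have hch' := List.isChain_cons_cons.1 hch
      have h2 := ih (List.cons_ne_nil f q') hch'.2
        (fun x hx => hno x (List.mem_cons_of_mem _ hx)) (i + 1)
      rw [List.head_cons] at h2
      rw [← hch'.1] at h2
      have h3 := G.tcon.trans h1 h2
      have h4 : (i + 1) + ((f :: q').length : ℤ) = i + ((e :: f :: q').length : ℤ) := by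
        simp only [List.length_cons]
        push_cast
        ring
      rw [h4] at h3
      have h5 : (e :: f :: q').getLast (List.cons_ne_nil _ _) = (f :: q').getLast (List.cons_ne_nil _ _) :=
        List.getLast_cons _
      rw [show (e :: f :: q').head (List.cons_ne_nil _ _) = e from rfl, h5]
      exact h3

lemma forward_dir (p : List Ed) (hc : G.IsCycle p) (hx : G.NoExit p) :
    ∃ (a : G.TM) (n : ℤ), a ≠ 0 ∧ n < 0 ∧ G.tshift n a = a := by
  obtain ⟨hne, hchain, hclose, hnd⟩ := hc
  have hlen : 0 < p.length := List.length_pos_iff.2 hne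
  refine ⟨G.tgen (G.s (p.head hne)) 0, -(p.length : ℤ), ?_, by omega, ?_⟩
  · intro h0
    have h1 : G.tcon.mk' {(G.s (p.head hne), 0)} = G.tcon.mk' 0 := by
      rw [map_zero]; exact h0
    have h2 := G.tcon_zero_iff ((AddCon.eq _).1 h1)
    simp at h2
  · have hw := G.tcon_walk p hne hchain hx (-(p.length : ℤ))
    rw [hclose] at hw
    have h4 : -((p.length : ℤ)) + (p.length : ℤ) = 0 := by ring
    rw [h4] at hw
    have h6 : G.tshift (-(p.length : ℤ)) (G.tcon.mk' {(G.s (p.head hne), (0:ℤ))})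
        = G.tcon.mk' (shiftMul (-(p.length : ℤ)) {(G.s (p.head hne), (0:ℤ))}) := rfl
    show G.tshift _ (G.tcon.mk' {(G.s (p.head hne), (0:ℤ))}) = G.tcon.mk' {(G.s (p.head hne), (0:ℤ))}
    rw [h6]
    have h5 : shiftMul (-(p.length : ℤ)) {(G.s (p.head hne), (0:ℤ))}
        = {(G.s (p.head hne), -(p.length : ℤ))} := by
      rw [shiftMul_apply]
      simp
    rw [h5]
    exact (AddCon.eq _).2 hw

end RFGraph

namespace RFGraph

variable {V Ed : Type} [DecidableEq V] (G : RFGraph V Ed)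

lemma backward_dir {X : Multiset (V × ℤ)} (hX : X ≠ 0) {n : ℤ} (hn : n < 0)
    (hcon : G.tcon (shiftMul n X) X) : ∃ p : List Ed, G.IsCycle p ∧ G.NoExit p := by
  classical
  obtain ⟨d₀, hd₀⟩ := G.tcon_elev hcon
  set m : ℕ := (-n).toNat with hmdef
  have hm1 : 1 ≤ m := by omega
  have hmz : (m : ℤ) = -n := by omega
  -- base shift relation
  have hbase : G.Elev (d₀ + (m:ℤ)) X = shiftMul (m:ℤ) (G.Elev d₀ X) := by
    have h1 : G.Elev ((d₀ + (m:ℤ)) + n) (shiftMul n X) = shiftMul n (G.Elev (d₀ + (m:ℤ)) X) :=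
      G.Elev_shift _ n X
    rw [show (d₀ + (m:ℤ)) + n = d₀ by omega] at h1
    have h2 : shiftMul n (G.Elev (d₀ + (m:ℤ)) X) = G.Elev d₀ X := by rw [← h1, hd₀]
    calc G.Elev (d₀ + (m:ℤ)) X = shiftMul 0 (G.Elev (d₀ + (m:ℤ)) X) := (shiftMul_zero' _).symm
      _ = shiftMul (n + (m:ℤ)) (G.Elev (d₀ + (m:ℤ)) X) := by rw [show (n + (m:ℤ)) = 0 by omega]
      _ = shiftMul (m:ℤ) (shiftMul n (G.Elev (d₀ + (m:ℤ)) X)) := (shiftMul_shiftMul _ _ _).symm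
      _ = shiftMul (m:ℤ) (G.Elev d₀ X) := by rw [h2]
  obtain ⟨D₀, hD₀d, hD₀X⟩ := exists_snd_ub X d₀
  set NN : ℕ → Multiset (V × ℤ) := fun k => G.Elev (D₀ + (k:ℤ)) X with hNNdef
  have shift_rel : ∀ d : ℤ, d₀ ≤ d → G.Elev (d + (m:ℤ)) X = shiftMul (m:ℤ) (G.Elev d X) := by
    intro d hd
    calc G.Elev (d + (m:ℤ)) X
        = G.Elev (d + (m:ℤ)) (G.Elev (d₀ + (m:ℤ)) X) := (G.Elev_comp (by omega) X).symm
      _ = G.Elev (d + (m:ℤ)) (shiftMul (m:ℤ) (G.Elev d₀ X)) := by rw [hbase]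
      _ = shiftMul (m:ℤ) (G.Elev d (G.Elev d₀ X)) := G.Elev_shift d (m:ℤ) _
      _ = shiftMul (m:ℤ) (G.Elev d X) := by rw [G.Elev_comp hd X]
  have NNshift : ∀ k : ℕ, NN (k + m) = shiftMul (m:ℤ) (NN k) := by
    intro k
    show G.Elev (D₀ + ((k + m : ℕ):ℤ)) X = shiftMul (m:ℤ) (G.Elev (D₀ + (k:ℤ)) X)
    rw [show (D₀ + ((k+m:ℕ):ℤ)) = (D₀ + (k:ℤ)) + (m:ℤ) by push_cast; ring]
    exact shift_rel (D₀ + (k:ℤ)) (by omega)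
  have NNshift_iter : ∀ (j k : ℕ), NN (j + k * m) = shiftMul ((k * m : ℕ):ℤ) (NN j) := by
    intro j k
    induction k with
    | zero => simp [shiftMul_zero']
    | succ k ih =>
      rw [show j + (k+1) * m = (j + k * m) + m by ring, NNshift (j + k * m), ih,
        shiftMul_shiftMul]
      congr 1
      push_cast; ring
  have struct : ∀ (k : ℕ) (w : V) (j : ℤ), (w, j) ∈ NN k → G.emit w ≠ ∅ ∧ j = D₀ + (k:ℤ) := by
    intro k w j hmem
    have hsink : G.emit w ≠ ∅ := by
      intro hs
      have hper : ∀ t : ℕ, (w, j - ((t * m : ℕ):ℤ)) ∈ NN k := by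
        intro t
        have h1 : (w, j) ∈ NN (k + t * m) := by
          show (w, j) ∈ G.Elev (D₀ + ((k + t * m : ℕ):ℤ)) X
          rw [← G.Elev_comp (show (D₀ + (k:ℤ)) ≤ D₀ + ((k + t * m : ℕ):ℤ) by omega) X]
          exact Multiset.mem_bind.2 ⟨(w, j), hmem, by
            rw [G.exp_sink hs]; exact Multiset.mem_singleton_self _⟩
        rw [NNshift_iter k t] at h1
        exact mem_shiftMul.1 h1
      obtain ⟨c, hc⟩ := exists_snd_lb (NN k)
      have h2 := hc _ (hper ((j - c).toNat + 1))
      have h3 : (((j - c).toNat + 1 : ℕ) : ℤ) ≤ ((((j - c).toNat + 1) * m : ℕ) : ℤ) := by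
        have := Nat.le_mul_of_pos_right ((j - c).toNat + 1) (show 0 < m by omega)
        exact_mod_cast this
      simp only at h2
      omega
    refine ⟨hsink, ?_⟩
    obtain ⟨⟨v, i⟩, hvX, hexp⟩ := Multiset.mem_bind.1 hmem
    obtain ⟨h1, h2⟩ := G.exp_mem hexp
    rcases h2 with h2 | h2
    · have hi := hD₀X _ hvX
      simp only at hi h2
      omega
    · exact absurd h2 hsink
  have NNstep : ∀ k : ℕ, NN (k+1)
      = (NN k).bind (fun p => (G.emit p.1).val.map (fun e => (G.r e, D₀ + (k:ℤ) + 1))) := by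
    intro k
    have h0 : NN (k+1) = G.Elev (D₀ + ((k+1:ℕ):ℤ)) (NN k) :=
      (G.Elev_comp (show (D₀ + (k:ℤ)) ≤ D₀ + ((k+1:ℕ):ℤ) by push_cast; omega) X).symm
    rw [h0]
    show (NN k).bind _ = (NN k).bind _
    apply Multiset.bind_congr
    rintro ⟨w, j⟩ hw
    obtain ⟨hne, hj⟩ := struct k w j hw
    have hfuel : ((D₀ + ((k+1:ℕ):ℤ)) - (w, j).2).toNat = 0 + 1 := by
      simp only; push_cast; omega
    rw [hfuel, G.exp_succ, if_neg hne]
    rw [show (fun e => G.exp 0 (G.r e) ((w, j).2 + 1))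
        = fun e => ({(G.r e, j + 1)} : Multiset (V × ℤ)) from rfl, Multiset.bind_singleton]
    apply Multiset.map_congr rfl
    intro e _
    rw [hj]
  have cardper : ∀ k : ℕ, Multiset.card (NN (k + m)) = Multiset.card (NN k) := by
    intro k
    rw [NNshift k, shiftMul_apply, Multiset.card_map]
  have cardmono : ∀ k : ℕ, Multiset.card (NN k) ≤ Multiset.card (NN (k+1)) := by
    intro k
    calc Multiset.card (NN k)
        ≤ (Multiset.map (fun p => (G.emit p.1).card) (NN k)).sum :=
          card_le_sum_map _ _ (fun p hp =>
            Finset.card_pos.2 (Finset.nonempty_iff_ne_empty.2 (struct k p.1 p.2 hp).1))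
      _ = Multiset.card (NN (k+1)) := by
          rw [NNstep k, Multiset.card_bind]
          apply congrArg Multiset.sum
          apply Multiset.map_congr rfl
          intro p _
          simp only [Function.comp_apply, Multiset.card_map]
          rfl
  have cardmono' : ∀ a b : ℕ, a ≤ b → Multiset.card (NN a) ≤ Multiset.card (NN b) := by
    intro a b hab
    induction hab with
    | refl => exact le_refl _
    | step _ ih => exact le_trans ih (cardmono _)
  have cardeq : ∀ k : ℕ, Multiset.card (NN (k+1)) = Multiset.card (NN k) := by
    intro k
    have h1 := cardmono k
    have h2 : Multiset.card (NN (k+1)) ≤ Multiset.card (NN (k + m)) := cardmono' _ _ (by omega)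
    rw [cardper k] at h2
    omega
  have deg1 : ∀ k : ℕ, ∀ p ∈ NN k, (G.emit p.1).card = 1 := by
    intro k
    apply eq_one_of_sum_eq_card (NN k) (fun p => (G.emit p.1).card)
    · intro p hp
      exact Finset.card_pos.2 (Finset.nonempty_iff_ne_empty.2 (struct k p.1 p.2 hp).1)
    · have h1 : Multiset.card (NN (k+1))
          = (Multiset.map (fun p => (G.emit p.1).card) (NN k)).sum := by
        rw [NNstep k, Multiset.card_bind]
        apply congrArg Multiset.sum
        apply Multiset.map_congr rfl
        intro p _
        simp only [Function.comp_apply, Multiset.card_map]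
        rfl
      rw [← h1, cardeq k]
  have hNN0 : NN 0 ≠ 0 := G.Elev_ne_zero _ hX
  obtain ⟨⟨w₀, j₀⟩, hw₀⟩ := Multiset.exists_mem_of_ne_zero hNN0
  have hj₀ : j₀ = D₀ + ((0:ℕ):ℤ) := (struct 0 w₀ j₀ hw₀).2
  obtain ⟨e₀, he₀⟩ := Finset.card_eq_one.1 (deg1 0 _ hw₀)
  haveI hEd : Nonempty Ed := ⟨e₀⟩
  set nxtE : V → Ed := fun w => if h : ∃ e, G.emit w = {e} then h.choose else Classical.arbitrary Ed
    with hnxtE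
  set nxtV : V → V := fun w => G.r (nxtE w) with hnxtV
  set vrt : ℕ → V := fun k => nxtV^[k] w₀ with hvrt
  have hemit' : ∀ w, (∃ e, G.emit w = {e}) → G.emit w = {nxtE w} := by
    intro w hex
    show G.emit w = {(fun w => if h : ∃ e, G.emit w = {e} then h.choose
      else Classical.arbitrary Ed) w}
    simp only
    rw [dif_pos hex]
    exact hex.choose_spec
  have horb : ∀ k : ℕ, (vrt k, D₀ + (k:ℤ)) ∈ NN k := by
    intro k
    induction k with
    | zero =>
      have hv0 : vrt 0 = w₀ := rfl
      rw [hv0]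
      have := hw₀
      rw [hj₀] at this
      exact this
    | succ k ih =>
      obtain ⟨e, he⟩ := Finset.card_eq_one.1 (deg1 k _ ih)
      have hem := hemit' (vrt k) ⟨e, he⟩
      have hstep : (G.r (nxtE (vrt k)), D₀ + (k:ℤ) + 1) ∈ NN (k+1) := by
        rw [NNstep k]
        refine Multiset.mem_bind.2 ⟨(vrt k, D₀ + (k:ℤ)), ih, ?_⟩
        refine Multiset.mem_map.2 ⟨nxtE (vrt k), ?_, rfl⟩
        rw [hem]
        exact Finset.mem_def.1 (Finset.mem_singleton_self _)
      have hv : vrt (k+1) = G.r (nxtE (vrt k)) := by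
        show nxtV^[k+1] w₀ = _
        rw [Function.iterate_succ_apply']
      rw [hv, show (D₀ + ((k+1:ℕ):ℤ)) = D₀ + (k:ℤ) + 1 by push_cast; ring]
      exact hstep
  have hemit : ∀ k : ℕ, G.emit (vrt k) = {nxtE (vrt k)} := by
    intro k
    obtain ⟨e, he⟩ := Finset.card_eq_one.1 (deg1 k _ (horb k))
    exact hemit' (vrt k) ⟨e, he⟩
  have hsrc : ∀ k : ℕ, G.s (nxtE (vrt k)) = vrt k := by
    intro k
    have : nxtE (vrt k) ∈ G.emit (vrt k) := by
      rw [hemit k]; exact Finset.mem_singleton_self _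
    exact (G.mem_emit _ _).1 this
  have hrst : ∀ k : ℕ, G.r (nxtE (vrt k)) = vrt (k+1) := by
    intro k
    show _ = nxtV^[k+1] w₀
    rw [Function.iterate_succ_apply']
  -- pigeonhole
  set S : Finset V := (NN 0).toFinset.image Prod.fst with hSdef
  have hmapsto : ∀ k : ℕ, vrt (k * m) ∈ S := by
    intro k
    have h1 := horb (k * m)
    have h2 : NN (k * m) = shiftMul ((k * m : ℕ):ℤ) (NN 0) := by
      have := NNshift_iter 0 k
      simpa using this
    rw [h2] at h1
    have h3 := mem_shiftMul.1 h1
    exact Finset.mem_image.2 ⟨_, Multiset.mem_toFinset.2 h3, rfl⟩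
  obtain ⟨a, ha, b, hb, hab, habe⟩ :=
    Finset.exists_ne_map_eq_of_card_lt_of_maps_to (s := Finset.range (S.card + 1)) (t := S)
      (by rw [Finset.card_range]; omega) (f := fun k => vrt (k * m)) (fun k _ => hmapsto k)
  have hex2 : ∃ t : ℕ, ∃ s : ℕ, s < t ∧ vrt s = vrt t := by
    rcases lt_or_gt_of_ne hab with h' | h'
    · exact ⟨b * m, a * m, mul_lt_mul_of_pos_right h' (by omega), habe⟩
    · exact ⟨a * m, b * m, mul_lt_mul_of_pos_right h' (by omega), habe.symm⟩
  haveI : DecidablePred (fun t : ℕ => ∃ s : ℕ, s < t ∧ vrt s = vrt t) :=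
    fun _ => Classical.dec _
  set t₀ := Nat.find hex2 with ht₀
  obtain ⟨s₀, hs₀t, hvst⟩ := Nat.find_spec hex2
  have hinj : ∀ x y : ℕ, x < y → y < t₀ → vrt x ≠ vrt y := by
    intro x y hxy hyt hxyeq
    exact Nat.find_min hex2 hyt ⟨x, hxy, hxyeq⟩
  set ℓ := t₀ - s₀ with hℓdef
  have hst : s₀ + ℓ = t₀ := by omega
  obtain ⟨ℓ', hℓ'⟩ : ∃ ℓ', ℓ = ℓ' + 1 := ⟨ℓ - 1, by omega⟩
  set L : List Ed := (List.range ℓ).map (fun j => nxtE (vrt (s₀ + j))) with hL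
  have hLlen : L.length = ℓ := by simp [hL]
  have hLne : L ≠ [] := by
    intro h0
    rw [h0] at hLlen
    simp at hLlen
    omega
  have hgetL : ∀ (j : ℕ) (hj : j < L.length), L[j] = nxtE (vrt (s₀ + j)) := by
    intro j hj
    simp [hL]
  have hhead : L.head hLne = nxtE (vrt s₀) := by
    rw [List.head_eq_getElem, hgetL 0 (by rw [hLlen]; omega)]
    simp
  have hlast : L.getLast hLne = nxtE (vrt (s₀ + ℓ')) := by
    rw [List.getLast_eq_getElem]
    have h1 : L.length - 1 = ℓ' := by rw [hLlen]; omega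
    have h2 : L.length - 1 < L.length := by rw [hLlen]; omega
    calc L[L.length - 1]'(by omega) = L[ℓ']'(by rw [hLlen]; omega) := by
          congr 1
      _ = nxtE (vrt (s₀ + ℓ')) := hgetL ℓ' _
  refine ⟨L, ⟨hLne, ?_, ?_, ?_⟩, ?_⟩
  · -- Chain'
    have hchR : List.Chain'
        (fun x y : ℕ => G.r (nxtE (vrt (s₀ + x))) = G.s (nxtE (vrt (s₀ + y))))
        (List.range ℓ) := by
      rw [hℓ']
      refine (List.isChain_range_succ _ ℓ').2 ?_
      intro j hj
      rw [hrst (s₀ + j), hsrc (s₀ + (j+1))]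
      rw [Nat.add_assoc]
    exact List.isChain_map_of_isChain (fun j => nxtE (vrt (s₀ + j))) (fun a b hab => hab) hchR
  · -- closing
    rw [hlast, hhead, hrst (s₀ + ℓ'), hsrc s₀]
    rw [show s₀ + ℓ' + 1 = t₀ by omega]
    exact hvst.symm
  · -- nodup
    have hmapeq : L.map G.s = (List.range ℓ).map (fun j => vrt (s₀ + j)) := by
      rw [hL, List.map_map]
      apply List.map_congr_left
      intro j _
      exact hsrc (s₀ + j)
    rw [hmapeq]
    refine List.Nodup.map_on ?_ List.nodup_range
    intro x hx y hy hxy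
    rw [List.mem_range] at hx hy
    by_contra hne'
    rcases lt_or_gt_of_ne hne' with h' | h'
    · exact hinj (s₀ + x) (s₀ + y) (by omega) (by omega) hxy
    · exact hinj (s₀ + y) (s₀ + x) (by omega) (by omega) hxy.symm
  · -- NoExit
    intro e he
    rw [hL] at he
    obtain ⟨j, hj, rfl⟩ := List.mem_map.1 he
    rw [hsrc (s₀ + j)]
    exact hemit (s₀ + j)

end RFGraph

/-- The graph `E` has a cycle with no exit if and only if there are a nonzero
`a ∈ M_E^{gr}` and a negative integer `n` with `ⁿa = a`. -/
theorem cycle_no_exit_iff_periodic {V Ed : Type} [DecidableEq V] (G : RFGraph V Ed) :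
    (∃ p : List Ed, G.IsCycle p ∧ G.NoExit p) ↔
      ∃ (a : G.TM) (n : ℤ), a ≠ 0 ∧ n < 0 ∧ G.tshift n a = a := by
  constructor
  · rintro ⟨p, hc, hx⟩
    exact G.forward_dir p hc hx
  · rintro ⟨a, n, ha, hn, hsh⟩
    obtain ⟨X, rfl⟩ := AddCon.mk'_surjective a
    have hX : X ≠ 0 := by
      rintro rfl
      exact ha (map_zero _)
    have h6 : G.tshift n (G.tcon.mk' X) = G.tcon.mk' (RFGraph.shiftMul n X) := rfl
    rw [h6] at hsh
    exact G.backward_dir hX hn ((AddCon.eq _).1 hsh)
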